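/- Let D be a positive integer, u_i the Racah polynomials defined by the three-term recurrence u_0(λ)=1, u_1(λ)=λ/3, λu_i = b_i u_{i+1} + a_i u_i + c_i u_{i−1}, and θ_j = 3 − 6j(j+1)/(D(D+2)). Then u_i(θ_j) = ₄F₃[−i, i+1, −j, j+1; 1, D+2, −D; 1] for all 0 ≤ i, j ≤ D. -/

import Mathlib

open Polynomial

/-- `a_i = 3i(i+1)/(D(D+2))`. -/
noncomputable def aa (D i : ℕ) : ℝ := 3 * (i : ℝ) * ((i : ℝ) + 1) / ((D : ℝ) * ((D : ℝ) + 2))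

/-- `b_i = 3(D−i)(i+1)(D+i+2)/(D(D+2)(2i+1))`. -/
noncomputable def bb (D i : ℕ) : ℝ :=
  3 * ((D : ℝ) - i) * ((i : ℝ) + 1) * ((D : ℝ) + i + 2) /
    ((D : ℝ) * ((D : ℝ) + 2) * (2 * (i : ℝ) + 1))

/-- `c_i = 3(D−i+1)i(D+i+1)/(D(D+2)(2i+1))`. -/
noncomputable def cc (D i : ℕ) : ℝ :=
  3 * ((D : ℝ) - i + 1) * (i : ℝ) * ((D : ℝ) + i + 1) /
    ((D : ℝ) * ((D : ℝ) + 2) * (2 * (i : ℝ) + 1))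

/-- `θ_i = 3 − 6i(i+1)/(D(D+2))`. -/
noncomputable def theta (D j : ℕ) : ℝ := 3 - 6 * (j : ℝ) * ((j : ℝ) + 1) / ((D : ℝ) * ((D : ℝ) + 2))

/-- Pochhammer symbol `(a)_n`. -/
noncomputable def poch (a : ℝ) (n : ℕ) : ℝ := ∏ k ∈ Finset.range n, (a + k)

/-- The terminating hypergeometric sum `₄F₃[−i, i+1, −j, j+1; 1, D+2, −D; 1]`. -/
noncomputable def F4 (D i j : ℕ) : ℝ :=
  ∑ n ∈ Finset.range (min i j + 1),
    (poch (-(i : ℝ)) n * poch ((i : ℝ) + 1) n * poch (-(j : ℝ)) n * poch ((j : ℝ) + 1) n) /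
      (poch 1 n * poch ((D : ℝ) + 2) n * poch (-(D : ℝ)) n * (n.factorial : ℝ))

lemma poch_zero (a : ℝ) : poch a 0 = 1 := by simp [poch]
lemma poch_succ (a : ℝ) (n : ℕ) : poch a (n+1) = poch a n * (a + n) := by
  simp [poch, Finset.prod_range_succ]
lemma poch_succ_left (a : ℝ) (n : ℕ) : poch a (n+1) = a * poch (a+1) n := by
  rw [poch, poch, Finset.prod_range_succ', mul_comm]
  congr 1
  · norm_num
  · exact Finset.prod_congr rfl (fun k _ => by push_cast; ring)
lemma poch_shift (a : ℝ) (n : ℕ) : poch (a+1) n * a = poch a n * (a + n) := by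
  induction n with
  | zero => simp [poch_zero]
  | succ n ih =>
    rw [poch_succ, poch_succ]; push_cast
    linear_combination (a + 1 + (n:ℝ)) * ih
lemma poch_pred (a : ℝ) (n : ℕ) : poch (a-1) (n+1) = (a-1) * poch a n := by
  rw [poch_succ_left, sub_add_cancel]
lemma poch_neg_nat_eq_zero {i n : ℕ} (h : i < n) : poch (-(i:ℝ)) n = 0 :=
  Finset.prod_eq_zero (Finset.mem_range.mpr h) (by simp)

lemma poch_pos {a : ℝ} (ha : 0 < a) (n : ℕ) : 0 < poch a n :=
  Finset.prod_pos fun k _ => by positivity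
lemma poch_neg_nat_ne_zero {D n : ℕ} (h : n ≤ D) : poch (-(D:ℝ)) n ≠ 0 := by
  rw [poch]
  apply Finset.prod_ne_zero_iff.mpr
  intro k hk
  have hk' : k < D := lt_of_lt_of_le (Finset.mem_range.mp hk) h
  have : (k:ℝ) < D := by exact_mod_cast hk'
  intro h0; linarith


noncomputable def Cc (D i n : ℕ) : ℝ :=
  poch (-(i:ℝ)) n * poch ((i:ℝ)+1) n /
    (poch 1 n * poch ((D:ℝ)+2) n * poch (-(D:ℝ)) n * (n.factorial : ℝ))
noncomputable def phj (j n : ℕ) : ℝ := poch (-(j:ℝ)) n * poch ((j:ℝ)+1) n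

lemma Cc_eq_zero {D i n : ℕ} (h : i < n) : Cc D i n = 0 := by
  simp [Cc, poch_neg_nat_eq_zero h]
lemma phj_eq_zero {j n : ℕ} (h : j < n) : phj j n = 0 := by
  simp [phj, poch_neg_nat_eq_zero h]
lemma Cc_zero (D i : ℕ) : Cc D i 0 = 1 := by
  simp [Cc, poch_zero]
lemma phj_zero (j : ℕ) : phj j 0 = 1 := by
  simp [phj, poch_zero]


set_option maxHeartbeats 1000000 in
lemma keyS (D i m : ℕ) (h1 : 1 ≤ i) (h2 : i + 1 ≤ D) (hm : m ≤ i) :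
    bb D i * Cc D (i+1) (m+1) + aa D i * Cc D i (m+1) + cc D i * Cc D (i-1) (m+1)
      = (3 - 6*((m:ℝ)+1)*((m:ℝ)+2)/((D:ℝ)*((D:ℝ)+2))) * Cc D i (m+1)
        + 6/((D:ℝ)*((D:ℝ)+2)) * Cc D i m := by
  have hci : ((i-1 : ℕ):ℝ) = (i:ℝ) - 1 := by
    have := Nat.cast_sub h1 (R := ℝ); simpa using this
  have hIpos : (1:ℝ) ≤ (i:ℝ) := by exact_mod_cast h1
  have hID : (i:ℝ) + 1 ≤ (D:ℝ) := by exact_mod_cast h2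
  have hMI : (m:ℝ) ≤ (i:ℝ) := by exact_mod_cast hm
  have hIn : (i:ℝ) ≠ 0 := by linarith
  have hI1n : (i:ℝ) + 1 ≠ 0 := by linarith
  have hA : poch (-((i:ℝ)+1)) (m+1) = (-((i:ℝ)+1)) * poch (-(i:ℝ)) m := by
    have h := poch_pred (-(i:ℝ)) m
    rw [show -(i:ℝ) - 1 = -((i:ℝ)+1) by ring] at h
    exact h
  have hB : poch ((i:ℝ)+1+1) (m+1)
      = poch ((i:ℝ)+1) m * (((i:ℝ)+1+(m:ℝ)) * ((i:ℝ)+2+(m:ℝ))) / ((i:ℝ)+1) := by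
    rw [show (i:ℝ)+1+1 = (i:ℝ)+2 by ring]
    have ha := poch_shift ((i:ℝ)+1) m
    rw [show (i:ℝ)+1+1 = (i:ℝ)+2 by ring] at ha
    rw [poch_succ]
    rw [eq_div_iff hI1n]
    push_cast
    linear_combination ((i:ℝ)+2+(m:ℝ)) * ha
  have hC : poch (-((i:ℝ)-1)) (m+1)
      = poch (-(i:ℝ)) m * (((m:ℝ)-(i:ℝ)) * ((m:ℝ)+1-(i:ℝ))) / (-(i:ℝ)) := by
    rw [show -((i:ℝ)-1) = -(i:ℝ)+1 by ring]
    have ha := poch_shift (-(i:ℝ)) m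
    rw [poch_succ]
    rw [eq_div_iff (neg_ne_zero.mpr hIn)]
    push_cast
    linear_combination (-(i:ℝ)+1+(m:ℝ)) * ha
  have hD6 : poch ((i:ℝ)-1+1) (m+1) = (i:ℝ) * poch ((i:ℝ)+1) m := by
    rw [show (i:ℝ)-1+1 = ((i:ℝ)+1) - 1 by ring, poch_pred]
    ring_nf
  have hP : poch (-(i:ℝ)) (m+1) = poch (-(i:ℝ)) m * ((m:ℝ) - (i:ℝ)) := by
    rw [poch_succ]; push_cast; ring
  have hQ : poch ((i:ℝ)+1) (m+1) = poch ((i:ℝ)+1) m * ((i:ℝ)+1+(m:ℝ)) :=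
    poch_succ ((i:ℝ)+1) m
  have hd1 : poch 1 (m+1) = poch 1 m * (1+(m:ℝ)) := by rw [poch_succ]
  have hd2 : poch ((D:ℝ)+2) (m+1) = poch ((D:ℝ)+2) m * ((D:ℝ)+2+(m:ℝ)) := by rw [poch_succ]
  have hd3 : poch (-(D:ℝ)) (m+1) = poch (-(D:ℝ)) m * ((m:ℝ)-(D:ℝ)) := by
    rw [poch_succ]; push_cast; ring
  have hf : (((m+1).factorial : ℕ):ℝ) = (m.factorial:ℝ) * ((m:ℝ)+1) := by
    rw [Nat.factorial_succ]; push_cast; ring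
  have hd1n : poch 1 m ≠ 0 := (poch_pos one_pos m).ne'
  have hd2n : poch ((D:ℝ)+2) m ≠ 0 := by
    refine (poch_pos ?_ m).ne'
    linarith
  have hd3n : poch (-(D:ℝ)) m ≠ 0 := poch_neg_nat_ne_zero (by omega)
  have hfn : (m.factorial:ℝ) ≠ 0 := by exact_mod_cast m.factorial_ne_zero
  have hDn : (D:ℝ) ≠ 0 := by linarith
  have hD2n : (D:ℝ) + 2 ≠ 0 := by linarith
  have h2In : 2*(i:ℝ) + 1 ≠ 0 := by linarith
  have hM1n : (m:ℝ) + 1 ≠ 0 := by positivity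
  have h1Mn : 1 + (m:ℝ) ≠ 0 := by positivity
  have hDMn : (D:ℝ) + 2 + (m:ℝ) ≠ 0 := by positivity
  have hMDn : (m:ℝ) - (D:ℝ) ≠ 0 := by
    intro h
    have : (m:ℝ) < (D:ℝ) := by linarith
    linarith
  set DEN : ℝ := (1+(m:ℝ)) * ((D:ℝ)+2+(m:ℝ)) * ((m:ℝ)-(D:ℝ)) * ((m:ℝ)+1) with hDEN
  have hDENn : DEN ≠ 0 := by
    rw [hDEN]
    exact mul_ne_zero (mul_ne_zero (mul_ne_zero h1Mn hDMn) hMDn) hM1n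
  have hc1 : Cc D (i+1) (m+1)
      = ((-((i:ℝ)+1)) * (((i:ℝ)+1+(m:ℝ)) * ((i:ℝ)+2+(m:ℝ))) / (((i:ℝ)+1) * DEN))
        * Cc D i m := by
    simp only [Cc]
    push_cast
    rw [hA, hB, hd1, hd2, hd3,
      show (((m:ℕ)+1).factorial : ℝ) = (m.factorial:ℝ) * ((m:ℝ)+1) from hf, hDEN]
    field_simp
  have hc2 : Cc D i (m+1)
      = (((m:ℝ)-(i:ℝ)) * ((i:ℝ)+1+(m:ℝ)) / DEN) * Cc D i m := by
    simp only [Cc]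
    push_cast
    rw [hP, hQ, hd1, hd2, hd3,
      show (((m:ℕ)+1).factorial : ℝ) = (m.factorial:ℝ) * ((m:ℝ)+1) from hf, hDEN]
    field_simp
  have hc3 : Cc D (i-1) (m+1)
      = (-(((m:ℝ)-(i:ℝ)) * (((m:ℝ)+1-(i:ℝ)))) / DEN) * Cc D i m := by
    simp only [Cc, hci]
    push_cast
    rw [hC, hD6, hd1, hd2, hd3,
      show (((m:ℕ)+1).factorial : ℝ) = (m.factorial:ℝ) * ((m:ℝ)+1) from hf, hDEN]
    field_simp
  have S : bb D i * ((-((i:ℝ)+1)) * (((i:ℝ)+1+(m:ℝ)) * ((i:ℝ)+2+(m:ℝ))) / (((i:ℝ)+1) * DEN))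
      + aa D i * (((m:ℝ)-(i:ℝ)) * ((i:ℝ)+1+(m:ℝ)) / DEN)
      + cc D i * (-(((m:ℝ)-(i:ℝ)) * (((m:ℝ)+1-(i:ℝ)))) / DEN)
      = (3 - 6*((m:ℝ)+1)*((m:ℝ)+2)/((D:ℝ)*((D:ℝ)+2)))
          * (((m:ℝ)-(i:ℝ)) * ((i:ℝ)+1+(m:ℝ)) / DEN)
        + 6/((D:ℝ)*((D:ℝ)+2)) := by
    simp only [bb, aa, cc, hDEN]
    field_simp
    ring
  rw [hc1, hc2, hc3]
  linear_combination (Cc D i m) * S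

lemma abc_sum (D i : ℕ) (hD : 0 < D) : bb D i + aa D i + cc D i = 3 := by
  have hDR : (0:ℝ) < D := by exact_mod_cast hD
  have h1 : (D:ℝ) ≠ 0 := ne_of_gt hDR
  have h2 : (D:ℝ) + 2 ≠ 0 := by positivity
  have h3 : 2*(i:ℝ)+1 ≠ 0 := by positivity
  simp only [bb, aa, cc]
  field_simp
  ring

lemma F4_eq_sum (D i j M : ℕ) (h : min i j + 1 ≤ M) :
    F4 D i j = ∑ n ∈ Finset.range M, Cc D i n * phj j n := by
  have hs : ∀ n : ℕ,
      (poch (-(i:ℝ)) n * poch ((i:ℝ)+1) n * poch (-(j:ℝ)) n * poch ((j:ℝ)+1) n) /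
        (poch 1 n * poch ((D:ℝ)+2) n * poch (-(D:ℝ)) n * (n.factorial:ℝ))
      = Cc D i n * phj j n := by
    intro n; rw [Cc, phj]; ring
  rw [F4]
  simp_rw [hs]
  refine Finset.sum_subset (Finset.range_subset_range.mpr h) (fun x hx hx' => ?_)
  have hmx : min i j < x := Nat.lt_of_succ_le (not_lt.mp (fun hh => hx' (Finset.mem_range.mpr hh)))
  rcases min_lt_iff.mp hmx with h' | h'
  · rw [Cc_eq_zero h', zero_mul]
  · rw [phj_eq_zero h', mul_zero]

noncomputable def gg (D i j : ℕ) : ℕ → ℝ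
  | 0 => 0
  | (m+1) => 6/((D:ℝ)*((D:ℝ)+2)) * (Cc D i m * phj j (m+1))

lemma F4_rec (D i j : ℕ) (h1 : 1 ≤ i) (h2 : i + 1 ≤ D) :
    theta D j * F4 D i j =
      bb D i * F4 D (i+1) j + aa D i * F4 D i j + cc D i * F4 D (i-1) j := by
  have hD : 0 < D := by omega
  have hm1 : min i j + 1 ≤ i + 2 := by have := Nat.min_le_left i j; omega
  have hm2 : min (i+1) j + 1 ≤ i + 2 := by have := Nat.min_le_left (i+1) j; omega
  have hm3 : min (i-1) j + 1 ≤ i + 2 := by have := Nat.min_le_left (i-1) j; omega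
  rw [F4_eq_sum D i j (i+2) hm1, F4_eq_sum D (i+1) j (i+2) hm2, F4_eq_sum D (i-1) j (i+2) hm3]
  rw [Finset.mul_sum, Finset.mul_sum, Finset.mul_sum, Finset.mul_sum,
    ← Finset.sum_add_distrib, ← Finset.sum_add_distrib]
  have key1 : ∀ n ∈ Finset.range (i+2), theta D j * (Cc D i n * phj j n)
      = ((3 - 6*(n:ℝ)*((n:ℝ)+1)/((D:ℝ)*((D:ℝ)+2))) * (Cc D i n * phj j n)
        + 6/((D:ℝ)*((D:ℝ)+2)) * (Cc D i n * phj j (n+1))) := by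
    intro n _
    have hphi : phj j (n+1) = phj j n * ((((n:ℝ))-j) * ((n:ℝ)+j+1)) := by
      simp only [phj, poch_succ]
      push_cast
      ring
    rw [hphi, theta]
    ring
  have hshift : ∑ n ∈ Finset.range (i+2), 6/((D:ℝ)*((D:ℝ)+2)) * (Cc D i n * phj j (n+1))
      = ∑ n ∈ Finset.range (i+2), gg D i j n := by
    have e1 : ∑ n ∈ Finset.range (i+3), gg D i j n
        = (∑ n ∈ Finset.range (i+2), gg D i j (n+1)) + gg D i j 0 :=
      Finset.sum_range_succ' _ _
    have e2 : ∑ n ∈ Finset.range (i+3), gg D i j n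
        = (∑ n ∈ Finset.range (i+2), gg D i j n) + gg D i j (i+2) :=
      Finset.sum_range_succ _ _
    have e3 : gg D i j (i+2) = 0 := by
      simp [gg, Cc_eq_zero (Nat.lt_succ_self i)]
    have e4 : ∑ n ∈ Finset.range (i+2), gg D i j (n+1)
        = ∑ n ∈ Finset.range (i+2), 6/((D:ℝ)*((D:ℝ)+2)) * (Cc D i n * phj j (n+1)) :=
      Finset.sum_congr rfl (fun n _ => rfl)
    rw [e4] at e1
    rw [e3, add_zero] at e2
    rw [← e2, e1, gg, add_zero]
  calc ∑ n ∈ Finset.range (i+2), theta D j * (Cc D i n * phj j n)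
      = ∑ n ∈ Finset.range (i+2),
          ((3 - 6*(n:ℝ)*((n:ℝ)+1)/((D:ℝ)*((D:ℝ)+2))) * (Cc D i n * phj j n)
            + 6/((D:ℝ)*((D:ℝ)+2)) * (Cc D i n * phj j (n+1))) :=
        Finset.sum_congr rfl key1
    _ = (∑ n ∈ Finset.range (i+2),
          (3 - 6*(n:ℝ)*((n:ℝ)+1)/((D:ℝ)*((D:ℝ)+2))) * (Cc D i n * phj j n))
        + ∑ n ∈ Finset.range (i+2), 6/((D:ℝ)*((D:ℝ)+2)) * (Cc D i n * phj j (n+1)) :=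
        Finset.sum_add_distrib
    _ = (∑ n ∈ Finset.range (i+2),
          (3 - 6*(n:ℝ)*((n:ℝ)+1)/((D:ℝ)*((D:ℝ)+2))) * (Cc D i n * phj j n))
        + ∑ n ∈ Finset.range (i+2), gg D i j n := by rw [hshift]
    _ = ∑ n ∈ Finset.range (i+2),
          ((3 - 6*(n:ℝ)*((n:ℝ)+1)/((D:ℝ)*((D:ℝ)+2))) * (Cc D i n * phj j n)
            + gg D i j n) := Finset.sum_add_distrib.symm
    _ = ∑ n ∈ Finset.range (i+2),
          (bb D i * (Cc D (i+1) n * phj j n) + aa D i * (Cc D i n * phj j n)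
            + cc D i * (Cc D (i-1) n * phj j n)) := by
        refine Finset.sum_congr rfl (fun n hn => ?_)
        match n with
        | 0 =>
          simp only [gg, Cc_zero, phj_zero]
          have habc := abc_sum D i hD
          push_cast
          norm_num
          linarith
        | (m+1) =>
          have hm : m ≤ i := by
            have := Finset.mem_range.mp hn; omega
          have hS := keyS D i m h1 h2 hm
          simp only [gg]
          push_cast
          linear_combination (-(phj j (m+1))) * hS

lemma bb_pos (D i : ℕ) (h2 : i + 1 ≤ D) : 0 < bb D i := by
  have hDpos : (0:ℝ) < D := by exact_mod_cast (by omega : 0 < D)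
  have hi : (i:ℝ) < D := by exact_mod_cast (by omega : i < D)
  rw [bb]
  apply div_pos
  · have h : (0:ℝ) < (D:ℝ) - i := by linarith
    have h' : (0:ℝ) < (i:ℝ) + 1 := by positivity
    have h'' : (0:ℝ) < (D:ℝ) + i + 2 := by positivity
    exact mul_pos (mul_pos (mul_pos (by norm_num : (0:ℝ) < 3) h) h') h'' 
  · positivity

lemma F4_zero_left (D j : ℕ) : F4 D 0 j = 1 := by
  rw [F4]
  simp [poch_zero]

theorem u_eval_theta (D : ℕ) (hD : 0 < D) (u : ℕ → Polynomial ℝ)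
    (h0 : u 0 = 1) (h1 : u 1 = Polynomial.C (1 / 3) * Polynomial.X)
    (hrec : ∀ i, 1 ≤ i → i ≤ D - 1 →
      Polynomial.X * u i =
        Polynomial.C (bb D i) * u (i + 1) + Polynomial.C (aa D i) * u i +
          Polynomial.C (cc D i) * u (i - 1)) :
    ∀ i j, i ≤ D → j ≤ D → (u i).eval (theta D j) = F4 D i j := by
  intro i
  induction i using Nat.strong_induction_on with
  | _ i ih =>
    intro j hi hj
    match i, hi, ih with
    | 0, hi, ih =>
      rw [h0, Polynomial.eval_one, F4_zero_left]
    | 1, hi, ih =>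
      rw [h1]
      simp only [Polynomial.eval_mul, Polynomial.eval_C, Polynomial.eval_X]
      match j with
      | 0 =>
        rw [F4]
        simp [poch_zero, theta]
      | (m+1) =>
        have hDn : (D:ℝ) ≠ 0 := by
          have : (0:ℝ) < D := by exact_mod_cast hD
          linarith
        have hD2n : (D:ℝ) + 2 ≠ 0 := by positivity
        rw [F4]
        rw [show min 1 (m+1) = 1 from Nat.min_eq_left (by omega)]
        rw [Finset.sum_range_succ, Finset.sum_range_one]
        simp only [poch_succ, poch_zero, theta]
        push_cast
        field_simp
        ring_nf
        field_simp
        ring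
    | (k+2), hi, ih =>
      have hrec' := hrec (k+1) (by omega) (by omega)
      have hev := congrArg (Polynomial.eval (theta D j)) hrec'
      simp only [Polynomial.eval_mul, Polynomial.eval_add, Polynomial.eval_C,
        Polynomial.eval_X, Nat.add_sub_cancel] at hev
      rw [ih (k+1) (by omega) j (by omega) hj, ih k (by omega) j (by omega) hj] at hev
      have hrecF := F4_rec D (k+1) j (by omega) (by omega)
      have hbb := (bb_pos D (k+1) (by omega)).ne'
      have hkey : bb D (k+1) * (u (k+1+1)).eval (theta D j) = bb D (k+1) * F4 D (k+1+1) j := by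
        have h := hrecF
        simp only [Nat.add_sub_cancel] at h
        linarith
      have := mul_left_cancel₀ hbb hkey
      exact this
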